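/- arXiv:1702.03511 — 2 statements merged into one kernel-verified Lean document; each statement's English description precedes it below -/
import Mathlib

section
/- Behavioural congruence of closed repetition-free PGA terms does not coincide with structural congruence: the terms +a;!;! and −a;!;! are behaviourally congruent (for all l, n, the threads extracted from #l;±a;!;!;!ⁿ coincide), but +a;!;! = −a;!;! is not derivable from the structural congruence axioms PGA1–PGA8, since the two terms denote distinct instruction sequences and PGA1–PGA8 preserve the denoted sequence up to resolving chained jumps and minimizing jumps into the repeating part—transformations that never change a test instruction into another. -/
/-- Primitive instructions over a set `A` of basic instructions: plain
basic instructions, positive and negative tests, forward jumps, and the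
termination instruction. -/
inductive PInstr (A : Type) where
  | basic : A → PInstr A
  | ptst : A → PInstr A
  | ntst : A → PInstr A
  | jmp : ℕ → PInstr A
  | halt : PInstr A

/-- Closed BTA terms over basic actions `A`: inaction `D`, termination `S`,
and postconditional composition. -/
inductive BTA (A : Type) where
  | D : BTA A
  | S : BTA A
  | pcc : BTA A → A → BTA A → BTA A

open PInstr BTA

/-- Thread extraction (rules TE1–TE13) as a relation between non-empty
finite instruction sequences (lists of primitive instructions) and closed
BTA terms.  `a ∘ x` is `x ◁ a ▷ x`, i.e. `pcc x a x`. -/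
inductive Extract {A : Type} : List (PInstr A) → BTA A → Prop where
  | te1 (a : A) : Extract [basic a] (pcc D a D)
  | te2 (a : A) {X : List (PInstr A)} {x : BTA A} :
      X ≠ [] → Extract X x → Extract (basic a :: X) (pcc x a x)
  | te3 (a : A) : Extract [ptst a] (pcc D a D)
  | te4 (a : A) {X : List (PInstr A)} {x y : BTA A} :
      X ≠ [] → Extract X x → Extract (jmp 2 :: X) y →
      Extract (ptst a :: X) (pcc x a y)
  | te5 (a : A) : Extract [ntst a] (pcc D a D)
  | te6 (a : A) {X : List (PInstr A)} {x y : BTA A} :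
      X ≠ [] → Extract X x → Extract (jmp 2 :: X) y →
      Extract (ntst a :: X) (pcc y a x)
  | te7 (l : ℕ) : Extract [jmp l] D
  | te8 {X : List (PInstr A)} : X ≠ [] → Extract (jmp 0 :: X) D
  | te9 {X : List (PInstr A)} {x : BTA A} :
      X ≠ [] → Extract X x → Extract (jmp 1 :: X) x
  | te10 (l : ℕ) (u : PInstr A) : Extract [jmp (l + 2), u] D
  | te11 (l : ℕ) (u : PInstr A) {X : List (PInstr A)} {x : BTA A} :
      X ≠ [] → Extract (jmp (l + 1) :: X) x →
      Extract (jmp (l + 2) :: u :: X) x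
  | te12 : Extract [(halt : PInstr A)] S
  | te13 {X : List (PInstr A)} : X ≠ [] → Extract (halt :: X) S

/-- A finite instruction sequence has chained jumps if some jump
instruction `#(n+1)` jumps onto another jump instruction. -/
def HasChainedJumps {A : Type} (t : List (PInstr A)) : Prop :=
  ∃ i n l : ℕ, t[i]? = some (jmp (n + 1)) ∧ t[i + n + 1]? = some (jmp l)

/-- Left-hand sides of the repetition-free control-flow simplification
axioms PGA9–PGA25 (as finite instruction sequences). -/
inductive SimpLHS {A : Type} : List (PInstr A) → Prop where
  | p9 (a : A) : SimpLHS [ptst a, jmp 0, jmp 0]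
  | p10 (a : A) : SimpLHS [ntst a, jmp 0, jmp 0]
  | p11 (a : A) : SimpLHS [ptst a, jmp 1]
  | p12 (a : A) : SimpLHS [ntst a, jmp 1]
  | p13 (a : A) (l : ℕ) : SimpLHS [ptst a, jmp (l + 2), jmp (l + 1)]
  | p14 (a : A) (l : ℕ) : SimpLHS [ntst a, jmp (l + 2), jmp (l + 1)]
  | p15 (a : A) : SimpLHS [ptst a, halt, halt]
  | p16 (a : A) : SimpLHS [ntst a, halt, halt]
  | p19 (a : A) (us : List (PInstr A)) :
      SimpLHS ([jmp (us.length + 3), jmp (us.length + 3), jmp (us.length + 3)]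
        ++ us ++ [ptst a])
  | p20 (a : A) (us : List (PInstr A)) :
      SimpLHS ([jmp (us.length + 3), jmp (us.length + 3), jmp (us.length + 3)]
        ++ us ++ [ntst a])
  | p21 (a : A) (us : List (PInstr A)) :
      SimpLHS ([jmp (us.length + 2), jmp (us.length + 2)] ++ us ++ [basic a])
  | p22 (a : A) (us vs : List (PInstr A)) :
      SimpLHS (jmp (us.length + vs.length + 4) :: us
        ++ [ptst a, jmp (vs.length + 3), jmp (vs.length + 3)] ++ vs ++ [ptst a])
  | p23 (a : A) (us vs : List (PInstr A)) :
      SimpLHS (jmp (us.length + vs.length + 4) :: us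
        ++ [ntst a, jmp (vs.length + 3), jmp (vs.length + 3)] ++ vs ++ [ntst a])
  | p24 (a : A) (us vs : List (PInstr A)) :
      SimpLHS (jmp (us.length + vs.length + 3) :: us
        ++ [basic a, jmp (vs.length + 2)] ++ vs ++ [basic a])
  | p25 (us : List (PInstr A)) :
      SimpLHS (jmp (us.length + 1) :: us ++ [halt])

/-- A finite instruction sequence has simplifiable control flow if it
contains (up to associativity, i.e. as a contiguous segment) the left-hand
side of one of the axioms PGA9–PGA25. -/
def SimplifiableCF {A : Type} (t : List (PInstr A)) : Prop :=
  ∃ p m s : List (PInstr A), t = p ++ m ++ s ∧ SimpLHS m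

/-- Third canonical form for finite (repetition-free) instruction
sequences: no chained jumps and no simplifiable control flow. -/
def ThirdCF {A : Type} (t : List (PInstr A)) : Prop :=
  ¬ HasChainedJumps t ∧ ¬ SimplifiableCF t

/-- Behavioural equivalence of finite instruction sequences: the threads
extracted from them coincide. -/
def BEqL {A : Type} (s s' : List (PInstr A)) : Prop :=
  ∃ b : BTA A, Extract s b ∧ Extract s' b

/-- Behavioural congruence: `t ≅ t'` iff `#l ; t ; !ⁿ ≈ #l ; t' ; !ⁿ` for
all `l, n ∈ ℕ`. -/
def BCongL {A : Type} (t t' : List (PInstr A)) : Prop :=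
  ∀ l n : ℕ, BEqL (jmp l :: (t ++ List.replicate n halt))
    (jmp l :: (t' ++ List.replicate n halt))

/-- Closed PGA terms. -/
inductive ISTm (A : Type) where
  | ins : PInstr A → ISTm A
  | seq : ISTm A → ISTm A → ISTm A
  | rep : ISTm A → ISTm A

/-- `pw t n` is `t^{n+1}`. -/
def ISTm.pw {A : Type} (t : ISTm A) : ℕ → ISTm A
  | 0 => t
  | n + 1 => .seq t (t.pw n)

/-- `cat us t` is the term `u₁ ; ⋯ ; uₖ ; t` (right-associated). -/
def ISTm.cat {A : Type} : List (PInstr A) → ISTm A → ISTm A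
  | [], t => t
  | u :: us, t => .seq (.ins u) (ISTm.cat us t)

/-- `nel u us` is the right-associated term of the non-empty list
`u :: us`. -/
def ISTm.nel {A : Type} : PInstr A → List (PInstr A) → ISTm A
  | u, [] => .ins u
  | u, v :: vs => .seq (.ins u) (ISTm.nel v vs)

/-- Equational derivability from the structural congruence axioms
PGA1–PGA8. -/
inductive Deriv8 {A : Type} : ISTm A → ISTm A → Prop where
  | refl (t) : Deriv8 t t
  | symm {t t'} : Deriv8 t t' → Deriv8 t' t
  | trans {t t' t''} : Deriv8 t t' → Deriv8 t' t'' → Deriv8 t t''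
  | seqCongr {s s' t t'} : Deriv8 s s' → Deriv8 t t' →
      Deriv8 (.seq s t) (.seq s' t')
  | repCongr {t t'} : Deriv8 t t' → Deriv8 (.rep t) (.rep t')
  | pga1 (x y z) : Deriv8 (.seq (.seq x y) z) (.seq x (.seq y z))
  | pga2 (x) (n : ℕ) : Deriv8 (.rep (x.pw n)) (.rep x)
  | pga3 (x y) : Deriv8 (.seq (.rep x) y) (.rep x)
  | pga4 (x y) : Deriv8 (.rep (.seq x y)) (.seq x (.rep (.seq y x)))
  | pga5 (us : List (PInstr A)) :
      Deriv8 (.cat (jmp (us.length + 1) :: us) (.ins (jmp 0)))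
        (.cat (jmp 0 :: us) (.ins (jmp 0)))
  | pga6 (us : List (PInstr A)) (l : ℕ) :
      Deriv8 (.cat (jmp (us.length + 1) :: us) (.ins (jmp l)))
        (.cat (jmp (l + us.length + 1) :: us) (.ins (jmp l)))
  | pga7 (us : List (PInstr A)) (l : ℕ) :
      Deriv8 (.rep (.nel (jmp (l + us.length + 1)) us))
        (.rep (.nel (jmp l) us))
  | pga8 (us : List (PInstr A)) (v : PInstr A) (vs : List (PInstr A)) (l : ℕ) :
      Deriv8
        (.cat (jmp (l + us.length + vs.length + 2) :: us) (.rep (.nel v vs)))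
        (.cat (jmp (l + us.length + 1) :: us) (.rep (.nel v vs)))

/-- Every nonempty instruction sequence extracts to some thread. -/
lemma ex_extract {A : Type} :
    ∀ n (X : List (PInstr A)), X.length ≤ n → X ≠ [] → ∃ b, Extract X b := by
  intro n
  induction n with
  | zero =>
      intro X hlen hne
      cases X with
      | nil => exact absurd rfl hne
      | cons u X => simp at hlen
  | succ n ih =>
      intro X hlen hne
      match X with
      | [] => exact absurd rfl hne
      | [u] =>
          cases u with
          | basic a => exact ⟨_, Extract.te1 a⟩
          | ptst a => exact ⟨_, Extract.te3 a⟩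
          | ntst a => exact ⟨_, Extract.te5 a⟩
          | jmp l => exact ⟨_, Extract.te7 l⟩
          | halt => exact ⟨_, Extract.te12⟩
      | u :: v :: X' =>
          have hne' : v :: X' ≠ [] := by simp
          have hlen' : (v :: X').length ≤ n := by
            simp at hlen ⊢; omega
          obtain ⟨x, hx⟩ := ih (v :: X') hlen' hne'
          cases u with
          | basic a => exact ⟨_, Extract.te2 a hne' hx⟩
          | halt => exact ⟨_, Extract.te13 hne'⟩
          | ptst a =>
              cases X' with
              | nil => exact ⟨_, Extract.te4 a hne' hx (Extract.te10 0 v)⟩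
              | cons w X'' =>
                  have hne'' : w :: X'' ≠ [] := by simp
                  have hlen'' : (w :: X'').length ≤ n := by
                    simp at hlen ⊢; omega
                  obtain ⟨y, hy⟩ := ih (w :: X'') hlen'' hne''
                  exact ⟨_, Extract.te4 a hne' hx
                    (Extract.te11 0 v hne'' (Extract.te9 hne'' hy))⟩
          | ntst a =>
              cases X' with
              | nil => exact ⟨_, Extract.te6 a hne' hx (Extract.te10 0 v)⟩
              | cons w X'' =>
                  have hne'' : w :: X'' ≠ [] := by simp
                  have hlen'' : (w :: X'').length ≤ n := by
                    simp at hlen ⊢; omega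
                  obtain ⟨y, hy⟩ := ih (w :: X'') hlen'' hne''
                  exact ⟨_, Extract.te6 a hne' hx
                    (Extract.te11 0 v hne'' (Extract.te9 hne'' hy))⟩
          | jmp l =>
              match l with
              | 0 => exact ⟨_, Extract.te8 hne'⟩
              | 1 => exact ⟨_, Extract.te9 hne' hx⟩
              | l + 2 =>
                  cases X' with
                  | nil => exact ⟨_, Extract.te10 l v⟩
                  | cons w X'' =>
                      have hne'' : w :: X'' ≠ [] := by simp
                      have hlen'' : (jmp (l+1) :: w :: X'').length ≤ n := by
                        simp at hlen ⊢; omega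
                      obtain ⟨y, hy⟩ := ih _ hlen'' (by simp)
                      exact ⟨_, Extract.te11 l v hne'' hy⟩

lemma extract_halts {A : Type} (n : ℕ) :
    Extract ((halt : PInstr A) :: List.replicate n halt) S := by
  cases n with
  | zero => exact Extract.te12
  | succ n => exact Extract.te13 (by simp)

lemma extract_ptst_body {A : Type} (a : A) (n : ℕ) :
    Extract (ptst a :: halt :: halt :: List.replicate n halt)
      (pcc S a S) := by
  refine Extract.te4 a (by simp) (Extract.te13 (by simp)) ?_
  exact Extract.te11 0 halt (by simp)
    (Extract.te9 (by simp) (extract_halts n))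

lemma extract_ntst_body {A : Type} (a : A) (n : ℕ) :
    Extract (ntst a :: halt :: halt :: List.replicate n halt)
      (pcc S a S) := by
  refine Extract.te6 a (by simp) (Extract.te13 (by simp)) ?_
  exact Extract.te11 0 halt (by simp)
    (Extract.te9 (by simp) (extract_halts n))

/-- First instruction of a term. -/
def fstI {A : Type} : ISTm A → PInstr A
  | .ins u => u
  | .seq s _ => fstI s
  | .rep t => fstI t

/-- Kind of an instruction: forget the target of jumps. -/
def kd {A : Type} : PInstr A → PInstr A
  | jmp _ => jmp 0
  | u => u

lemma fstI_pw {A : Type} (x : ISTm A) (n : ℕ) : fstI (x.pw n) = fstI x := by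
  induction n with
  | zero => rfl
  | succ n ih => rfl

lemma fstI_cat {A : Type} (u : PInstr A) (us : List (PInstr A)) (t : ISTm A) :
    fstI (ISTm.cat (u :: us) t) = u := rfl

lemma fstI_nel {A : Type} (u : PInstr A) (us : List (PInstr A)) :
    fstI (ISTm.nel u us) = u := by
  cases us <;> rfl

lemma deriv_kd {A : Type} {t t' : ISTm A} (h : Deriv8 t t') :
    kd (fstI t) = kd (fstI t') := by
  induction h with
  | refl t => rfl
  | symm _ ih => exact ih.symm
  | trans _ _ ih1 ih2 => exact ih1.trans ih2
  | seqCongr _ _ ih1 _ => exact ih1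
  | repCongr _ ih => exact ih
  | pga1 x y z => rfl
  | pga2 x n => simp only [fstI, fstI_pw]
  | pga3 x y => rfl
  | pga4 x y => rfl
  | pga5 us => simp only [fstI_cat]; rfl
  | pga6 us l => simp only [fstI_cat]; rfl
  | pga7 us l => simp only [fstI, fstI_nel]; rfl
  | pga8 us v vs l => simp only [fstI_cat]; rfl

/-- Behavioural congruence does not coincide with structural congruence:
`+a;!;!` and `−a;!;!` are behaviourally congruent, but their equality is
not derivable from the structural congruence axioms PGA1–PGA8. -/
theorem bcong_ne_scong {A : Type} (a : A) :
    BCongL [ptst a, halt, halt] [ntst a, halt, halt] ∧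
    ¬ Deriv8 (ISTm.nel (ptst a) [halt, halt])
      (ISTm.nel (ntst a) [halt, halt]) := by
  constructor
  · intro l n
    simp only [List.cons_append, List.nil_append]
    match l with
    | 0 => exact ⟨D, Extract.te8 (by simp), Extract.te8 (by simp)⟩
    | 1 =>
        exact ⟨pcc S a S,
          Extract.te9 (by simp) (extract_ptst_body a n),
          Extract.te9 (by simp) (extract_ntst_body a n)⟩
    | l + 2 =>
        obtain ⟨b, hb⟩ := ex_extract (n + 3)
          (jmp (l + 1) :: halt :: halt :: List.replicate n halt)
          (by simp) (by simp)
        exact ⟨b, Extract.te11 l (ptst a) (by simp) hb,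
          Extract.te11 l (ntst a) (by simp) hb⟩
  · intro h
    have := deriv_kd h
    rw [fstI_nel, fstI_nel] at this
    simp [kd] at this
end

section
/- For any basic instruction a and natural numbers k ≥ 0, the thread extracted from the closed PGA term (#(k+2);#(k+1);u₁;⋯;uₖ;+a)^ω equals the thread extracted from (a;#(k+1);u₁;⋯;uₖ;a)^ω, where u₁,…,uₖ are arbitrary primitive instructions (this is the content of axiom PGA27, and its soundness for behavioural equivalence). -/
open PInstr

/-- Equational derivability from the structural congruence axioms
PGA1–PGA8. -/
inductive EqI {A : Type} : ISTm A → ISTm A → Prop where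
  | refl (t) : EqI t t
  | symm {t t'} : EqI t t' → EqI t' t
  | trans {t t' t''} : EqI t t' → EqI t' t'' → EqI t t''
  | seqCongr {s s' t t'} : EqI s s' → EqI t t' → EqI (.seq s t) (.seq s' t')
  | repCongr {t t'} : EqI t t' → EqI (.rep t) (.rep t')
  | pga1 (x y z) : EqI (.seq (.seq x y) z) (.seq x (.seq y z))
  | pga2 (x) (n : ℕ) : EqI (.rep (x.pw n)) (.rep x)
  | pga3 (x y) : EqI (.seq (.rep x) y) (.rep x)
  | pga4 (x y) : EqI (.rep (.seq x y)) (.seq x (.rep (.seq y x)))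
  | pga5 (us : List (PInstr A)) :
      EqI (.cat (jmp (us.length + 1) :: us) (.ins (jmp 0)))
        (.cat (jmp 0 :: us) (.ins (jmp 0)))
  | pga6 (us : List (PInstr A)) (l : ℕ) :
      EqI (.cat (jmp (us.length + 1) :: us) (.ins (jmp l)))
        (.cat (jmp (l + us.length + 1) :: us) (.ins (jmp l)))
  | pga7 (us : List (PInstr A)) (l : ℕ) :
      EqI (.rep (.nel (jmp (l + us.length + 1)) us))
        (.rep (.nel (jmp l) us))
  | pga8 (us : List (PInstr A)) (v : PInstr A) (vs : List (PInstr A)) (l : ℕ) :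
      EqI (.cat (jmp (l + us.length + vs.length + 2) :: us) (.rep (.nel v vs)))
        (.cat (jmp (l + us.length + 1) :: us) (.rep (.nel v vs)))

/-- Thread terms of the combination of PGA with BTA with projections:
inaction `D`, termination `S`, postconditional composition, projections,
and thread extraction applied to instruction-sequence terms. -/
inductive TT (A : Type) where
  | D : TT A
  | S : TT A
  | pcc : TT A → A → TT A → TT A
  | proj : ℕ → TT A → TT A
  | extr : ISTm A → TT A

/-- Derivable equality of thread terms from TE1–TE13, PR1–PR4, AIP, and
the structural congruence axioms PGA1–PGA8 (lifted through thread
extraction). -/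
inductive EqT {A : Type} : TT A → TT A → Prop where
  | refl (x) : EqT x x
  | symm {x y} : EqT x y → EqT y x
  | trans {x y z} : EqT x y → EqT y z → EqT x z
  | pccCongr {x x' y y'} (a : A) : EqT x x' → EqT y y' →
      EqT (.pcc x a y) (.pcc x' a y')
  | projCongr (n : ℕ) {x y} : EqT x y → EqT (.proj n x) (.proj n y)
  | extrCongr {t t' : ISTm A} : EqI t t' → EqT (.extr t) (.extr t')
  | te1 (a : A) : EqT (.extr (.ins (basic a))) (.pcc .D a .D)
  | te2 (a : A) (X : ISTm A) :
      EqT (.extr (.seq (.ins (basic a)) X)) (.pcc (.extr X) a (.extr X))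
  | te3 (a : A) : EqT (.extr (.ins (ptst a))) (.pcc .D a .D)
  | te4 (a : A) (X : ISTm A) :
      EqT (.extr (.seq (.ins (ptst a)) X))
        (.pcc (.extr X) a (.extr (.seq (.ins (jmp 2)) X)))
  | te5 (a : A) : EqT (.extr (.ins (ntst a))) (.pcc .D a .D)
  | te6 (a : A) (X : ISTm A) :
      EqT (.extr (.seq (.ins (ntst a)) X))
        (.pcc (.extr (.seq (.ins (jmp 2)) X)) a (.extr X))
  | te7 (l : ℕ) : EqT (.extr (.ins (jmp l) : ISTm A)) .D
  | te8 (X : ISTm A) : EqT (.extr (.seq (.ins (jmp 0)) X)) .D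
  | te9 (X : ISTm A) : EqT (.extr (.seq (.ins (jmp 1)) X)) (.extr X)
  | te10 (l : ℕ) (u : PInstr A) :
      EqT (.extr (.seq (.ins (jmp (l + 2))) (.ins u))) .D
  | te11 (l : ℕ) (u : PInstr A) (X : ISTm A) :
      EqT (.extr (.seq (.ins (jmp (l + 2))) (.seq (.ins u) X)))
        (.extr (.seq (.ins (jmp (l + 1))) X))
  | te12 : EqT (.extr (.ins (halt : PInstr A))) .S
  | te13 (X : ISTm A) : EqT (.extr (.seq (.ins halt) X)) .S
  | pr1 (x : TT A) : EqT (.proj 0 x) .D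
  | pr2 (n : ℕ) : EqT (.proj (n + 1) (.D : TT A)) .D
  | pr3 (n : ℕ) : EqT (.proj (n + 1) (.S : TT A)) .S
  | pr4 (n : ℕ) (x y : TT A) (a : A) :
      EqT (.proj (n + 1) (.pcc x a y)) (.pcc (.proj n x) a (.proj n y))
  | aip {x y : TT A} : (∀ n : ℕ, EqT (.proj n x) (.proj n y)) → EqT x y

/-- `halts n` is `!^{n+1}`. -/
def halts {A : Type} : ℕ → ISTm A
  | 0 => .ins halt
  | n + 1 => .seq (.ins halt) (halts n)

/-- `appHalts t n` is `t ; !ⁿ`, with `t ; !⁰ = t`. -/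
def appHalts {A : Type} (t : ISTm A) : ℕ → ISTm A
  | 0 => t
  | n + 1 => .seq t (halts n)

/-- Behavioural equivalence: the threads extracted from the two terms are
derivably equal. -/
def BEqv {A : Type} (t t' : ISTm A) : Prop := EqT (.extr t) (.extr t')

/-- Behavioural congruence: `t ≅ t'` iff for all `l, n ∈ ℕ`,
`#l ; t ; !ⁿ ≈ #l ; t' ; !ⁿ`. -/
def BCong {A : Type} (t t' : ISTm A) : Prop :=
  ∀ l n : ℕ, BEqv (.seq (.ins (jmp l)) (appHalts t n))
    (.seq (.ins (jmp l)) (appHalts t' n))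


section Aux
open PInstr
variable {A : Type}

lemma eqI_unfold (x : ISTm A) : EqI (.rep x) (.seq x (.rep x)) := by
  have h1 : EqI (ISTm.rep (x.pw 1)) (ISTm.rep x) := EqI.pga2 x 1
  have h2 : (x.pw 1 : ISTm A) = .seq x x := rfl
  refine EqI.trans (EqI.symm h1) ?_
  rw [h2]
  refine EqI.trans (EqI.pga4 x x) ?_
  exact EqI.seqCongr (EqI.refl x) (h2 ▸ h1)

lemma nel_seq (u : PInstr A) (us : List (PInstr A)) (X : ISTm A) :
    EqI (.seq (ISTm.nel u us) X) (.seq (.ins u) (ISTm.cat us X)) := by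
  induction us generalizing u with
  | nil => exact EqI.refl _
  | cons v vs ih =>
      refine EqI.trans (EqI.pga1 _ _ _) ?_
      exact EqI.seqCongr (EqI.refl _) (ih v)

lemma cat_append (l₁ l₂ : List (PInstr A)) (X : ISTm A) :
    ISTm.cat (l₁ ++ l₂) X = ISTm.cat l₁ (ISTm.cat l₂ X) := by
  induction l₁ with
  | nil => rfl
  | cons u us ih => simp [ISTm.cat, ih]

lemma unfold_nel (u : PInstr A) (ls : List (PInstr A)) :
    EqT (.extr (.rep (ISTm.nel u ls)))
      (.extr (.seq (.ins u) (ISTm.cat ls (.rep (ISTm.nel u ls))))) :=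
  EqT.extrCongr (EqI.trans (eqI_unfold _) (nel_seq u ls _))

lemma jmp_cat (us : List (PInstr A)) (X : ISTm A) :
    EqT (.extr (.seq (.ins (jmp (us.length + 1))) (ISTm.cat us X))) (.extr X) := by
  induction us with
  | nil => exact EqT.te9 X
  | cons u vs ih =>
      have h : EqT (.extr (.seq (.ins (jmp (vs.length + 2)))
          (.seq (.ins u) (ISTm.cat vs X))))
          (.extr (.seq (.ins (jmp (vs.length + 1))) (ISTm.cat vs X))) :=
        EqT.te11 vs.length u (ISTm.cat vs X)
      exact EqT.trans h ih

end Aux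

/-- Soundness of axiom PGA27 for behavioural equivalence: the thread
extracted from `(#(k+2);#(k+1);u₁;⋯;uₖ;+a)^ω` equals the thread extracted
from `(a;#(k+1);u₁;⋯;uₖ;a)^ω` (here `k = us.length`). -/
theorem pga27_sound {A : Type} (a : A) (us : List (PInstr A)) :
    BEqv
      (.rep (.nel (jmp (us.length + 2)) (jmp (us.length + 1) :: us ++ [ptst a])))
      (.rep (.nel (basic a) (jmp (us.length + 1) :: us ++ [basic a]))) := by
  classical
  set k := us.length with hk
  set X : ISTm A :=
    .rep (.nel (jmp (k + 2)) (jmp (k + 1) :: us ++ [ptst a])) with hX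
  set Y : ISTm A :=
    .rep (.nel (basic a) (jmp (k + 1) :: us ++ [basic a])) with hY
  show EqT (.extr X) (.extr Y)
  set P : TT A := .extr X with hPdef
  set Q : TT A := .extr Y with hQdef
  set R : TT A := .extr (.seq (.ins (basic a)) Y) with hRdef
  -- rewrite the cat of the appended lists
  have hcatL : ISTm.cat (jmp (k + 1) :: us ++ [ptst a]) X
      = .seq (.ins (jmp (k + 1))) (ISTm.cat us (.seq (.ins (ptst a)) X)) := by
    show ISTm.cat ((jmp (k + 1) :: us) ++ [ptst a]) X = _
    rw [cat_append]; rfl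
  have hcatR : ISTm.cat (jmp (k + 1) :: us ++ [basic a]) Y
      = .seq (.ins (jmp (k + 1))) (ISTm.cat us (.seq (.ins (basic a)) Y)) := by
    show ISTm.cat ((jmp (k + 1) :: us) ++ [basic a]) Y = _
    rw [cat_append]; rfl
  -- the inner jump: ⟨#(k+1); u₁⋯uₖ; t⟩ = ⟨t⟩
  have hjmp : ∀ t : ISTm A,
      EqT (.extr (.seq (.ins (jmp (k + 1))) (ISTm.cat us t))) (.extr t) := by
    intro t; exact jmp_cat us t
  -- left-hand side unfolding: P = ⟨+a ; X⟩
  have hL1 : EqT P (.extr (.seq (.ins (ptst a)) X)) := by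
    have h0 := unfold_nel (A := A) (jmp (k + 2)) (jmp (k + 1) :: us ++ [ptst a])
    rw [← hX, hcatL] at h0
    refine EqT.trans h0 ?_
    have h1 : EqT
        (.extr (.seq (.ins (jmp (k + 2)))
          (.seq (.ins (jmp (k + 1))) (ISTm.cat us (.seq (.ins (ptst a)) X)))))
        (.extr (.seq (.ins (jmp (k + 1))) (ISTm.cat us (.seq (.ins (ptst a)) X)))) :=
      EqT.te11 k (jmp (k + 1)) _
    exact EqT.trans h1 (hjmp _)
  -- ⟨#2 ; X⟩ = ⟨+a ; X⟩
  have hL2 : EqT (.extr (.seq (.ins (jmp 2)) X)) (.extr (.seq (.ins (ptst a)) X)) := by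
    have hXeq : EqI X (.seq (.ins (jmp (k + 2)))
        (.seq (.ins (jmp (k + 1))) (ISTm.cat us (.seq (.ins (ptst a)) X)))) := by
      have := EqI.trans (eqI_unfold (ISTm.nel (jmp (k + 2)) (jmp (k + 1) :: us ++ [ptst a])))
        (nel_seq (jmp (k + 2)) (jmp (k + 1) :: us ++ [ptst a]) _)
      rw [← hX, hcatL] at this
      exact this
    have h0 : EqT (.extr (.seq (.ins (jmp 2)) X))
        (.extr (.seq (.ins (jmp 2)) (.seq (.ins (jmp (k + 2)))
          (.seq (.ins (jmp (k + 1))) (ISTm.cat us (.seq (.ins (ptst a)) X)))))) :=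
      EqT.extrCongr (EqI.seqCongr (EqI.refl _) hXeq)
    refine EqT.trans h0 ?_
    have h1 := EqT.te11 (A := A) 0 (jmp (k + 2))
      (.seq (.ins (jmp (k + 1))) (ISTm.cat us (.seq (.ins (ptst a)) X)))
    refine EqT.trans h1 ?_
    refine EqT.trans (EqT.te9 _) ?_
    exact hjmp _
  -- P = P ◁ a ▷ P
  have hP : EqT P (.pcc P a P) := by
    refine EqT.trans hL1 ?_
    refine EqT.trans (EqT.te4 a X) ?_
    refine EqT.pccCongr a (EqT.refl _) ?_
    exact EqT.trans hL2 (EqT.symm hL1)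
  -- right-hand side: Q = R ◁ a ▷ R, R = Q ◁ a ▷ Q
  have hQ : EqT Q (.pcc R a R) := by
    have h0 := unfold_nel (A := A) (basic a) (jmp (k + 1) :: us ++ [basic a])
    rw [← hY, hcatR] at h0
    refine EqT.trans h0 ?_
    refine EqT.trans (EqT.te2 a _) ?_
    exact EqT.pccCongr a (hjmp _) (hjmp _)
  have hR : EqT R (.pcc Q a Q) := EqT.te2 a Y
  -- AIP
  have key : ∀ n : ℕ, EqT (.proj n P) (.proj n Q) ∧ EqT (.proj n P) (.proj n R) := by
    intro n
    induction n with
    | zero => exact ⟨EqT.trans (EqT.pr1 _) (EqT.symm (EqT.pr1 _)),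
        EqT.trans (EqT.pr1 _) (EqT.symm (EqT.pr1 _))⟩
    | succ n ih =>
        have hP' : EqT (.proj (n + 1) P) (.pcc (.proj n P) a (.proj n P)) :=
          EqT.trans (EqT.projCongr _ hP) (EqT.pr4 n P P a)
        have hQ' : EqT (.proj (n + 1) Q) (.pcc (.proj n R) a (.proj n R)) :=
          EqT.trans (EqT.projCongr _ hQ) (EqT.pr4 n R R a)
        have hR' : EqT (.proj (n + 1) R) (.pcc (.proj n Q) a (.proj n Q)) :=
          EqT.trans (EqT.projCongr _ hR) (EqT.pr4 n Q Q a)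
        refine ⟨?_, ?_⟩
        · exact EqT.trans hP'
            (EqT.trans (EqT.pccCongr a ih.2 ih.2) (EqT.symm hQ'))
        · exact EqT.trans hP'
            (EqT.trans (EqT.pccCongr a ih.1 ih.1) (EqT.symm hR'))
  exact EqT.aip fun n => (key n).1
end
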